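/- Let $a:\mathbb{R}\to(0,\infty)$ and $b:\mathbb{R}\to\mathbb{R}$ be continuous, $B(x)=\int_0^x b/a$, $m=a^{-1}e^{2B}$, $s=e^{-2B}$, $\mu = m/\int_{\mathbb{R}} m$ with $\int_{\mathbb{R}} m<\infty$. Assume both entrance-boundary conditions: $\int_0^{\infty} m(x)\int_0^x s\,dx<\infty$ and $\int_{-\infty}^0 m(x)\int_x^0 s\,dx<\infty$. Define $F(x) = 2\int_x^{\infty}\mu(y)\int_x^y s(z)\int_{-\infty}^z m(w)\,dw\,dz\,dy + 2\int_{-\infty}^x \mu(y)\int_y^x s(z)\int_z^{\infty} m(w)\,dw\,dz\,dy$. Then $F$ is twice differentiable and $\tfrac12 a(x)F''(x)+b(x)F'(x)=0$ for all $x\in\mathbb{R}$. -/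

import Mathlib

open MeasureTheory Set

lemma aux_Ioi_split (f : ℝ → ℝ) (hf : IntegrableOn f (Ioi 0)) (hc : Continuous f) (x : ℝ) :
    IntegrableOn f (Ioi x) ∧
      ∫ t in Ioi x, f t = (∫ t in Ioi 0, f t) - ∫ t in (0:ℝ)..x, f t := by
  rcases le_or_gt x 0 with hx | hx
  · have hIoc : IntegrableOn f (Ioc x 0) := hc.integrableOn_Ioc
    have hu : Ioc x 0 ∪ Ioi 0 = Ioi x := Ioc_union_Ioi_eq_Ioi hx
    have hint : IntegrableOn f (Ioi x) := by
      rw [← hu]; exact hIoc.union hf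
    refine ⟨hint, ?_⟩
    have := setIntegral_union (Ioc_disjoint_Ioi le_rfl) measurableSet_Ioi hIoc hf
    rw [hu] at this
    rw [this, intervalIntegral.integral_symm, intervalIntegral.integral_of_le hx]
    ring
  · have hu : Ioc 0 x ∪ Ioi x = Ioi 0 := Ioc_union_Ioi_eq_Ioi hx.le
    have hint : IntegrableOn f (Ioi x) := hf.mono_set (Ioi_subset_Ioi hx.le)
    have hIoc : IntegrableOn f (Ioc 0 x) := hc.integrableOn_Ioc
    refine ⟨hint, ?_⟩
    have := setIntegral_union (Ioc_disjoint_Ioi le_rfl) measurableSet_Ioi hIoc hint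
    rw [hu] at this
    rw [this, intervalIntegral.integral_of_le hx.le]
    ring

lemma aux_Iio_split (f : ℝ → ℝ) (hf : IntegrableOn f (Iio 0)) (hc : Continuous f) (x : ℝ) :
    IntegrableOn f (Iio x) ∧
      ∫ t in Iio x, f t = (∫ t in Iio 0, f t) + ∫ t in (0:ℝ)..x, f t := by
  rcases le_or_gt x 0 with hx | hx
  · have hu : Iio x ∪ Ico x 0 = Iio 0 := Iio_union_Ico_eq_Iio hx
    have hint : IntegrableOn f (Iio x) := hf.mono_set (Iio_subset_Iio hx)
    have hIco : IntegrableOn f (Ico x 0) := hc.integrableOn_Icc.mono_set Ico_subset_Icc_self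
    refine ⟨hint, ?_⟩
    have := setIntegral_union ((Iio_disjoint_Ici le_rfl).mono_right Ico_subset_Ici_self)
      measurableSet_Ico hint hIco
    rw [hu] at this
    have h2 : ∫ t in Ico x 0, f t = ∫ t in Ioc x 0, f t := by
      rw [integral_Ico_eq_integral_Ioo, integral_Ioc_eq_integral_Ioo]
    rw [intervalIntegral.integral_symm, intervalIntegral.integral_of_le hx]
    rw [this, h2]; ring
  · have hu : Iio 0 ∪ Ico 0 x = Iio x := Iio_union_Ico_eq_Iio hx.le
    have hIco : IntegrableOn f (Ico 0 x) := hc.integrableOn_Icc.mono_set Ico_subset_Icc_self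
    have hint : IntegrableOn f (Iio x) := by rw [← hu]; exact hf.union hIco
    refine ⟨hint, ?_⟩
    have := setIntegral_union ((Iio_disjoint_Ici le_rfl).mono_right Ico_subset_Ici_self)
      measurableSet_Ico hf hIco
    rw [hu] at this
    have h2 : ∫ t in Ico 0 x, f t = ∫ t in Ioc 0 x, f t := by
      rw [integral_Ico_eq_integral_Ioo, integral_Ioc_eq_integral_Ioo]
    rw [this, h2, intervalIntegral.integral_of_le hx.le]

set_option maxHeartbeats 2000000 in
/-- The averaged expected hitting time `F` is twice differentiable and
`L`-harmonic: `(1/2) a F'' + b F' = 0`. -/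
theorem stmt5 (a b B m s μ F : ℝ → ℝ)
    (ha : Continuous a) (hapos : ∀ x, 0 < a x) (hbc : Continuous b)
    (hB : ∀ x, B x = ∫ t in (0:ℝ)..x, b t / a t)
    (hm : ∀ x, m x = (a x)⁻¹ * Real.exp (2 * B x))
    (hs : ∀ x, s x = Real.exp (-(2 * B x)))
    (hmint : Integrable m)
    (hμ : ∀ x, μ x = m x / ∫ w, m w)
    (hentp : IntegrableOn (fun x => m x * ∫ t in (0:ℝ)..x, s t) (Ioi 0))
    (hentm : IntegrableOn (fun x => m x * ∫ t in x..(0:ℝ), s t) (Iio 0))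
    (hF : ∀ x, F x =
        2 * (∫ y in Ioi x, μ y * ∫ z in x..y, s z * ∫ w in Iio z, m w) +
        2 * (∫ y in Iio x, μ y * ∫ z in y..x, s z * ∫ w in Ioi z, m w)) :
    (∀ x, DifferentiableAt ℝ F x) ∧ (∀ x, DifferentiableAt ℝ (deriv F) x) ∧
      ∀ x, (1/2) * a x * deriv (deriv F) x + b x * deriv F x = 0 := by
  -- basic continuity
  have hane : ∀ x, a x ≠ 0 := fun x => (hapos x).ne'
  have hBc : Continuous B := by
    have hba : Continuous fun t => b t / a t := hbc.div ha hane
    have : ∀ x, DifferentiableAt ℝ B x := by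
      intro x
      have := (hba.integral_hasStrictDerivAt 0 x).hasDerivAt.differentiableAt
      apply this.congr_of_eventuallyEq
      filter_upwards with y using (hB y)
    exact continuous_iff_continuousAt.mpr fun x => (this x).continuousAt
  have hmc : Continuous m := by
    rw [funext hm]
    exact (ha.inv₀ hane).mul (Real.continuous_exp.comp (continuous_const.mul hBc))
  have hsc : Continuous s := by
    rw [funext hs]
    exact Real.continuous_exp.comp (continuous_const.mul hBc).neg
  have hmpos : ∀ x, 0 < m x := fun x => by
    rw [hm x]; exact mul_pos (inv_pos.mpr (hapos x)) (Real.exp_pos _)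
  have hmnn : ∀ x, 0 ≤ m x := fun x => (hmpos x).le
  have hsnn : ∀ x, 0 ≤ s x := fun x => by rw [hs x]; positivity
  set T : ℝ := ∫ w, m w with hT
  have hTpos : 0 < T := by
    rw [hT, integral_pos_iff_support_of_nonneg hmnn hmint]
    have hsup : Function.support m = univ := by ext x; simp [(hmpos x).ne']
    rw [hsup, Real.volume_univ]
    exact ENNReal.zero_lt_top
  have hμc : Continuous μ := by
    rw [funext hμ]; exact hmc.div_const T
  have hμnn : ∀ x, 0 ≤ μ x := fun x => by
    rw [hμ x]; exact div_nonneg (hmnn x) hTpos.le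
  have hμint : Integrable μ := by
    rw [funext hμ]; exact hmint.div_const T
  set Mneg : ℝ → ℝ := fun z => ∫ w in Iio z, m w with hMneg
  set Mpos : ℝ → ℝ := fun z => ∫ w in Ioi z, m w with hMpos
  have hMnegD : ∀ x, HasDerivAt Mneg (m x) x := by
    intro x
    have he : Mneg = fun z => (∫ t in Iio 0, m t) + ∫ t in (0:ℝ)..z, m t :=
      funext fun z => (aux_Iio_split m hmint.integrableOn hmc z).2
    rw [he]
    exact ((hmc.integral_hasStrictDerivAt 0 x).hasDerivAt).const_add _
  have hMposD : ∀ x, HasDerivAt Mpos (-(m x)) x := by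
    intro x
    have he : Mpos = fun z => (∫ t in Ioi 0, m t) - ∫ t in (0:ℝ)..z, m t :=
      funext fun z => (aux_Ioi_split m hmint.integrableOn hmc z).2
    rw [he]
    exact ((hmc.integral_hasStrictDerivAt 0 x).hasDerivAt).const_sub _
  have hMnegC : Continuous Mneg :=
    continuous_iff_continuousAt.mpr fun x => (hMnegD x).continuousAt
  have hMposC : Continuous Mpos :=
    continuous_iff_continuousAt.mpr fun x => (hMposD x).continuousAt
  have hMnegNN : ∀ z, 0 ≤ Mneg z := fun z =>
    setIntegral_nonneg measurableSet_Iio fun w _ => hmnn w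
  have hMposNN : ∀ z, 0 ≤ Mpos z := fun z =>
    setIntegral_nonneg measurableSet_Ioi fun w _ => hmnn w
  have hMnegle : ∀ z, Mneg z ≤ T := fun z =>
    setIntegral_le_integral hmint (Filter.Eventually.of_forall hmnn)
  have hMposle : ∀ z, Mpos z ≤ T := fun z =>
    setIntegral_le_integral hmint (Filter.Eventually.of_forall hmnn)
  set g : ℝ → ℝ := fun z => s z * Mneg z with hgdef
  set h : ℝ → ℝ := fun z => s z * Mpos z with hhdef
  have hgc : Continuous g := hsc.mul hMnegC
  have hhc : Continuous h := hsc.mul hMposC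
  set G0 : ℝ → ℝ := fun t => ∫ z in (0:ℝ)..t, g z with hG0def
  set H0 : ℝ → ℝ := fun t => ∫ z in (0:ℝ)..t, h z with hH0def
  have hG0D : ∀ x, HasDerivAt G0 (g x) x := fun x =>
    (hgc.integral_hasStrictDerivAt 0 x).hasDerivAt
  have hH0D : ∀ x, HasDerivAt H0 (h x) x := fun x =>
    (hhc.integral_hasStrictDerivAt 0 x).hasDerivAt
  have hG0C : Continuous G0 := continuous_iff_continuousAt.mpr fun x => (hG0D x).continuousAt
  have hH0C : Continuous H0 := continuous_iff_continuousAt.mpr fun x => (hH0D x).continuousAt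
  -- integrability of μ * G0 on Ioi 0
  have hμG0int : IntegrableOn (fun y => μ y * G0 y) (Ioi 0) := by
    apply Integrable.mono' hentp ((hμc.mul hG0C).aestronglyMeasurable)
    rw [ae_restrict_iff' measurableSet_Ioi]
    filter_upwards with y hy
    have hy0 : (0:ℝ) ≤ y := le_of_lt hy
    have hG0nn : 0 ≤ G0 y :=
      intervalIntegral.integral_nonneg hy0 fun z _ => mul_nonneg (hsnn z) (hMnegNN z)
    have hG0le : G0 y ≤ T * ∫ t in (0:ℝ)..y, s t := by
      have h1 : G0 y ≤ ∫ z in (0:ℝ)..y, T * s z := by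
        apply intervalIntegral.integral_mono_on hy0 (hgc.intervalIntegrable 0 y)
          ((continuous_const.mul hsc).intervalIntegrable 0 y)
        intro z _
        calc s z * Mneg z ≤ s z * T :=
              mul_le_mul_of_nonneg_left (hMnegle z) (hsnn z)
          _ = T * s z := mul_comm _ _
      rwa [intervalIntegral.integral_const_mul] at h1
    rw [Real.norm_eq_abs, Pi.mul_apply, abs_of_nonneg (mul_nonneg (hμnn y) hG0nn), hμ y]
    calc m y / T * G0 y ≤ m y / T * (T * ∫ t in (0:ℝ)..y, s t) :=
          mul_le_mul_of_nonneg_left hG0le (div_nonneg (hmnn y) hTpos.le)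
      _ = m y * ∫ t in (0:ℝ)..y, s t := by
          field_simp
  -- integrability of μ * H0 on Iio 0
  have hμH0int : IntegrableOn (fun y => μ y * H0 y) (Iio 0) := by
    apply Integrable.mono' hentm ((hμc.mul hH0C).aestronglyMeasurable)
    rw [ae_restrict_iff' measurableSet_Iio]
    filter_upwards with y hy
    have hy0 : y ≤ (0:ℝ) := le_of_lt hy
    have habs : |H0 y| = ∫ z in y..(0:ℝ), h z := by
      have hsymm : H0 y = -(∫ z in y..(0:ℝ), h z) := intervalIntegral.integral_symm y 0
      have hnn : 0 ≤ ∫ z in y..(0:ℝ), h z :=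
        intervalIntegral.integral_nonneg hy0 fun z _ => mul_nonneg (hsnn z) (hMposNN z)
      rw [hsymm, abs_neg, abs_of_nonneg hnn]
    have hHle : (∫ z in y..(0:ℝ), h z) ≤ T * ∫ t in y..(0:ℝ), s t := by
      have h1 : (∫ z in y..(0:ℝ), h z) ≤ ∫ z in y..(0:ℝ), T * s z := by
        apply intervalIntegral.integral_mono_on hy0 (hhc.intervalIntegrable y 0)
          ((continuous_const.mul hsc).intervalIntegrable y 0)
        intro z _
        calc s z * Mpos z ≤ s z * T :=
              mul_le_mul_of_nonneg_left (hMposle z) (hsnn z)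
          _ = T * s z := mul_comm _ _
      rwa [intervalIntegral.integral_const_mul] at h1
    rw [Real.norm_eq_abs, Pi.mul_apply, abs_mul, abs_of_nonneg (hμnn y), habs, hμ y]
    calc m y / T * ∫ z in y..(0:ℝ), h z ≤ m y / T * (T * ∫ t in y..(0:ℝ), s t) :=
          mul_le_mul_of_nonneg_left hHle (div_nonneg (hmnn y) hTpos.le)
      _ = m y * ∫ t in y..(0:ℝ), s t := by field_simp
  -- constants
  set CG : ℝ := ∫ t in Ioi (0:ℝ), μ t * G0 t with hCG
  set CP : ℝ := ∫ t in Ioi (0:ℝ), μ t with hCP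
  set CN : ℝ := ∫ t in Iio (0:ℝ), μ t with hCN
  set CH : ℝ := ∫ t in Iio (0:ℝ), μ t * H0 t with hCH
  -- key representation of F
  have key : ∀ x, F x =
      2 * ((CG - ∫ t in (0:ℝ)..x, μ t * G0 t) - G0 x * (CP - ∫ t in (0:ℝ)..x, μ t))
      + 2 * (H0 x * (CN + ∫ t in (0:ℝ)..x, μ t) - (CH + ∫ t in (0:ℝ)..x, μ t * H0 t)) := by
    intro x
    obtain ⟨hi1, he1⟩ := aux_Ioi_split (fun y => μ y * G0 y) hμG0int (hμc.mul hG0C) x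
    obtain ⟨hi2, he2⟩ := aux_Ioi_split μ hμint.integrableOn hμc x
    obtain ⟨hi3, he3⟩ := aux_Iio_split μ hμint.integrableOn hμc x
    obtain ⟨hi4, he4⟩ := aux_Iio_split (fun y => μ y * H0 y) hμH0int (hμc.mul hH0C) x
    rw [hF x]
    have p1 : ∀ y : ℝ, μ y * (∫ z in x..y, s z * ∫ w in Iio z, m w)
        = μ y * G0 y - G0 x * μ y := by
      intro y
      have hz : (∫ z in x..y, s z * ∫ w in Iio z, m w) = G0 y - G0 x := by
        rw [show (fun z => s z * ∫ w in Iio z, m w) = g from rfl]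
        rw [hG0def]
        exact (intervalIntegral.integral_interval_sub_left
          (hgc.intervalIntegrable 0 y) (hgc.intervalIntegrable 0 x)).symm
      rw [hz]; ring
    have p2 : ∀ y : ℝ, μ y * (∫ z in y..x, s z * ∫ w in Ioi z, m w)
        = H0 x * μ y - μ y * H0 y := by
      intro y
      have hz : (∫ z in y..x, s z * ∫ w in Ioi z, m w) = H0 x - H0 y := by
        rw [show (fun z => s z * ∫ w in Ioi z, m w) = h from rfl]
        rw [hH0def]
        exact (intervalIntegral.integral_interval_sub_left
          (hhc.intervalIntegrable 0 x) (hhc.intervalIntegrable 0 y)).symm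
      rw [hz]; ring
    have e1 : (∫ y in Ioi x, μ y * ∫ z in x..y, s z * ∫ w in Iio z, m w)
        = (∫ y in Ioi x, μ y * G0 y) - G0 x * ∫ y in Ioi x, μ y := by
      simp only [p1]
      rw [integral_sub hi1 (hi2.const_mul (G0 x)), integral_const_mul]
    have e2 : (∫ y in Iio x, μ y * ∫ z in y..x, s z * ∫ w in Ioi z, m w)
        = H0 x * (∫ y in Iio x, μ y) - ∫ y in Iio x, μ y * H0 y := by
      simp only [p2]
      rw [integral_sub (hi3.const_mul (H0 x)) hi4, integral_const_mul]
    rw [e1, e2, he1, he2, he3, he4]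
  -- F has derivative 0 everywhere
  have hFD : ∀ x, HasDerivAt F 0 x := by
    intro x
    have hP : HasDerivAt (fun u => ∫ t in (0:ℝ)..u, μ t * G0 t) (μ x * G0 x) x :=
      ((hμc.mul hG0C).integral_hasStrictDerivAt 0 x).hasDerivAt
    have hQ : HasDerivAt (fun u => ∫ t in (0:ℝ)..u, μ t) (μ x) x :=
      (hμc.integral_hasStrictDerivAt 0 x).hasDerivAt
    have hR : HasDerivAt (fun u => ∫ t in (0:ℝ)..u, μ t * H0 t) (μ x * H0 x) x :=
      ((hμc.mul hH0C).integral_hasStrictDerivAt 0 x).hasDerivAt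
    have hd : HasDerivAt (fun u =>
        2 * ((CG - ∫ t in (0:ℝ)..u, μ t * G0 t) - G0 u * (CP - ∫ t in (0:ℝ)..u, μ t))
        + 2 * (H0 u * (CN + ∫ t in (0:ℝ)..u, μ t) - (CH + ∫ t in (0:ℝ)..u, μ t * H0 t)))
        (2 * ((0 - μ x * G0 x) - (g x * (CP - ∫ t in (0:ℝ)..x, μ t) + G0 x * (0 - μ x)))
        + 2 * ((h x * (CN + ∫ t in (0:ℝ)..x, μ t) + H0 x * (0 + μ x)) - (0 + μ x * H0 x))) x := by
      exact (HasDerivAt.const_mul 2 (((hasDerivAt_const x CG).sub hP).sub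
          ((hG0D x).mul ((hasDerivAt_const x CP).sub hQ)))).add
        (HasDerivAt.const_mul 2 (((hH0D x).mul ((hasDerivAt_const x CN).add hQ)).sub
          ((hasDerivAt_const x CH).add hR)))
    have hNpos : CP - ∫ t in (0:ℝ)..x, μ t = Mpos x / T := by
      rw [hCP, ← (aux_Ioi_split μ hμint.integrableOn hμc x).2, hMpos]
      simp only [hμ]
      rw [integral_div]
    have hNneg : CN + ∫ t in (0:ℝ)..x, μ t = Mneg x / T := by
      rw [hCN, ← (aux_Iio_split μ hμint.integrableOn hμc x).2, hMneg]
      simp only [hμ]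
      rw [integral_div]
    have hzero :
        (2 * ((0 - μ x * G0 x) - (g x * (CP - ∫ t in (0:ℝ)..x, μ t) + G0 x * (0 - μ x)))
        + 2 * ((h x * (CN + ∫ t in (0:ℝ)..x, μ t) + H0 x * (0 + μ x)) - (0 + μ x * H0 x))) = 0 := by
      rw [hNpos, hNneg, hgdef, hhdef]
      ring
    rw [funext key]
    rw [hzero] at hd
    exact hd
  have hderiv : deriv F = fun _ => 0 := funext fun x => (hFD x).deriv
  refine ⟨fun x => (hFD x).differentiableAt, ?_, ?_⟩
  · intro x; rw [hderiv]; exact differentiableAt_const 0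
  · intro x; rw [hderiv]; simp
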